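/- Let C be a d-cuboid (d ≥ 1) in ℝⁿ, β a vertex of order 2 in C, and i ∈ Dim(C) the index such that β is the top vertex of ∂'_i(C). If L is a partial lift on the vertices C \ {β} with values in Γ(G,u), then u ≥ |C + β|_L ≥ |β − ∂'_i(C)|_L ≥ 0. -/

import Mathlib

/-- A cuboid in `ℝⁿ`, determined by reals `lo i ≤ hi i`; its dimension set is
`{i | lo i < hi i}` and its vertices are the tuples with `i`-th coordinate in
`{lo i, hi i}`. -/
structure Cuboid (n : ℕ) where
  lo : Fin n → ℝ
  hi : Fin n → ℝ
  lo_le_hi : ∀ i, lo i ≤ hi i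

namespace Cuboid

variable {n : ℕ}

/-- `i ∈ Dim(C)`. -/
def IsDim (C : Cuboid n) (i : Fin n) : Prop := C.lo i < C.hi i

/-- The admissible vertex selectors: on degenerate coordinates we take the (unique)
upper value. `φ i = true` selects `hi i`, `φ i = false` selects `lo i`. -/
def Allowed (C : Cuboid n) (φ : Fin n → Bool) : Prop := ∀ i, ¬C.IsDim i → φ i = true

/-- The vertex of `C` selected by `φ`. -/
def vertex (C : Cuboid n) (φ : Fin n → Bool) : Fin n → ℝ :=
  fun i => if φ i then C.hi i else C.lo i

/-- The set of vertices of `C`, as points of `ℝⁿ`. -/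
def vertexSet (C : Cuboid n) : Set (Fin n → ℝ) :=
  {p | ∃ φ, C.Allowed φ ∧ p = C.vertex φ}

/-- The upper facet `∂ᵢ(C)` (coordinate `i` fixed at `hi i`). -/
def upperFacet (C : Cuboid n) (i : Fin n) : Cuboid n :=
  ⟨Function.update C.lo i (C.hi i), C.hi, fun j => by
    rcases eq_or_ne j i with h | h
    · subst h; simp
    · simpa [Function.update_of_ne h] using C.lo_le_hi j⟩

/-- The lower facet `∂'ᵢ(C)` (coordinate `i` fixed at `lo i`). -/
def lowerFacet (C : Cuboid n) (i : Fin n) : Cuboid n :=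
  ⟨C.lo, Function.update C.hi i (C.lo i), fun j => by
    rcases eq_or_ne j i with h | h
    · subst h; simp
    · simpa [Function.update_of_ne h] using C.lo_le_hi j⟩

/-- The degenerate cuboid consisting of the single point `p`. -/
def pt (p : Fin n → ℝ) : Cuboid n := ⟨p, p, fun _ => le_rfl⟩

open scoped Classical in
/-- The finite set of admissible vertex selectors of `C`. -/
noncomputable def allowedSet (C : Cuboid n) : Finset (Fin n → Bool) :=
  Finset.univ.filter fun φ => C.Allowed φ

/-- The number of lower coordinates chosen by `φ`; the order of the corresponding
vertex is `lowerCount φ + 1`. -/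
def lowerCount {n : ℕ} (φ : Fin n → Bool) : ℕ :=
  (Finset.univ.filter fun i => φ i = false).card

/-- The "volume" `|C|_f = Σ_α (−1)^{ord_C(α)+1} f(α)` over the vertices of `C`. -/
noncomputable def vol {G : Type*} [AddCommGroup G] (C : Cuboid n)
    (f : (Fin n → ℝ) → G) : G :=
  ∑ φ ∈ C.allowedSet, (-1 : ℤ) ^ lowerCount φ • f (C.vertex φ)

/-- The vertex expansion of `C` with the vertex selected by `φ₀` omitted. -/
noncomputable def volExcept {G : Type*} [AddCommGroup G] (C : Cuboid n)
    (φ₀ : Fin n → Bool) (f : (Fin n → ℝ) → G) : G :=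
  ∑ φ ∈ C.allowedSet.erase φ₀, (-1 : ℤ) ^ lowerCount φ • f (C.vertex φ)

end Cuboid

namespace Cuboid

variable {n : ℕ}

-- ### auxiliary lemmas

lemma mem_allowedSet {C : Cuboid n} {φ : Fin n → Bool} :
    φ ∈ C.allowedSet ↔ C.Allowed φ := by
  classical
  simp [allowedSet]

lemma vertex_inj {C : Cuboid n} {φ ψ : Fin n → Bool} (hφ : C.Allowed φ)
    (hψ : C.Allowed ψ) (h : C.vertex φ = C.vertex ψ) : φ = ψ := by
  funext j
  by_cases hd : C.IsDim j
  · have hj := congrFun h j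
    have hne : C.lo j ≠ C.hi j := ne_of_lt hd
    cases hφj : φ j <;> cases hψj : ψ j
    · rfl
    · exact absurd (show C.lo j = C.hi j by simpa [vertex, hφj, hψj] using hj) hne
    · exact absurd (show C.hi j = C.lo j by simpa [vertex, hφj, hψj] using hj).symm hne
    · rfl
  · rw [hφ j hd, hψ j hd]

lemma isDim_upperFacet {C : Cuboid n} {j k : Fin n} :
    (C.upperFacet j).IsDim k ↔ k ≠ j ∧ C.IsDim k := by
  unfold IsDim upperFacet
  rcases eq_or_ne k j with rfl | h
  · simp
  · simp [Function.update_of_ne h, h]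

lemma isDim_lowerFacet {C : Cuboid n} {j k : Fin n} :
    (C.lowerFacet j).IsDim k ↔ k ≠ j ∧ C.IsDim k := by
  unfold IsDim lowerFacet
  rcases eq_or_ne k j with rfl | h
  · simp
  · simp [Function.update_of_ne h, h]

lemma allowed_upperFacet {C : Cuboid n} {j : Fin n} {φ : Fin n → Bool} :
    (C.upperFacet j).Allowed φ ↔ C.Allowed φ ∧ φ j = true := by
  constructor
  · intro h
    exact ⟨fun k hk => h k (by rw [isDim_upperFacet]; tauto),
      h j (by rw [isDim_upperFacet]; tauto)⟩
  · rintro ⟨h1, h2⟩ k hk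
    rw [isDim_upperFacet] at hk
    push_neg at hk
    rcases eq_or_ne k j with rfl | hkj
    · exact h2
    · exact h1 k (hk hkj)

lemma allowed_lowerFacet {C : Cuboid n} {j : Fin n} {φ : Fin n → Bool} :
    (C.lowerFacet j).Allowed φ ↔ C.Allowed φ ∧ φ j = true := by
  constructor
  · intro h
    exact ⟨fun k hk => h k (by rw [isDim_lowerFacet]; tauto),
      h j (by rw [isDim_lowerFacet]; tauto)⟩
  · rintro ⟨h1, h2⟩ k hk
    rw [isDim_lowerFacet] at hk
    push_neg at hk
    rcases eq_or_ne k j with rfl | hkj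
    · exact h2
    · exact h1 k (hk hkj)

lemma vertex_upperFacet {C : Cuboid n} {j : Fin n} (φ : Fin n → Bool) :
    (C.upperFacet j).vertex φ = C.vertex (Function.update φ j true) := by
  funext k
  rcases eq_or_ne k j with rfl | h
  · cases hφ : φ k <;> simp [vertex, upperFacet, hφ]
  · simp [vertex, upperFacet, Function.update_of_ne h]

lemma vertex_lowerFacet {C : Cuboid n} {j : Fin n} (φ : Fin n → Bool) :
    (C.lowerFacet j).vertex φ = C.vertex (Function.update φ j false) := by
  funext k
  rcases eq_or_ne k j with rfl | h
  · cases hφ : φ k <;> simp [vertex, lowerFacet, hφ]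
  · simp [vertex, lowerFacet, Function.update_of_ne h]

lemma lowerCount_update_true {φ : Fin n → Bool} {j : Fin n} (h : φ j = false) :
    lowerCount φ = lowerCount (Function.update φ j true) + 1 := by
  classical
  unfold lowerCount
  have hset : (Finset.univ.filter fun k => Function.update φ j true k = false)
      = (Finset.univ.filter fun k => φ k = false).erase j := by
    ext k
    rcases eq_or_ne k j with rfl | hkj
    · simp
    · simp [Function.update_of_ne hkj, hkj]
  have hmem : j ∈ Finset.univ.filter fun k => φ k = false := by simp [h]
  rw [hset, Finset.card_erase_of_mem hmem]
  have hpos : 0 < (Finset.univ.filter fun k => φ k = false).card :=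
    Finset.card_pos.2 ⟨j, hmem⟩
  omega


lemma update_eq_self_of_true {φ : Fin n → Bool} {j : Fin n} (h : φ j = true) :
    Function.update φ j true = φ := by
  rw [← h]; exact Function.update_eq_self j φ

lemma update_eq_self_of_false {φ : Fin n → Bool} {j : Fin n} (h : φ j = false) :
    Function.update φ j false = φ := by
  rw [← h]; exact Function.update_eq_self j φ

lemma vol_decomp {G : Type*} [AddCommGroup G] (C : Cuboid n) (j : Fin n)
    (hj : C.IsDim j) (f : (Fin n → ℝ) → G) :
    C.vol f = (C.upperFacet j).vol f - (C.lowerFacet j).vol f := by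
  classical
  have hsplit := Finset.sum_filter_add_sum_filter_not C.allowedSet
    (fun φ => φ j = true) (fun φ => (-1 : ℤ) ^ lowerCount φ • f (C.vertex φ))
  have hsetu : (C.upperFacet j).allowedSet
      = C.allowedSet.filter fun φ => φ j = true := by
    ext φ
    simp [mem_allowedSet, allowed_upperFacet, Finset.mem_filter]
  have hup : (C.upperFacet j).vol f
      = ∑ φ ∈ C.allowedSet.filter (fun φ => φ j = true),
          (-1 : ℤ) ^ lowerCount φ • f (C.vertex φ) := by
    rw [vol, hsetu]
    refine Finset.sum_congr rfl fun φ hφ => ?_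
    have hφj : φ j = true := by simpa using (Finset.mem_filter.1 hφ).2
    rw [vertex_upperFacet, update_eq_self_of_true hφj]
  have hlow : ∑ φ ∈ C.allowedSet.filter (fun φ => ¬(φ j = true)),
      (-1 : ℤ) ^ lowerCount φ • f (C.vertex φ) = -(C.lowerFacet j).vol f := by
    rw [vol, ← Finset.sum_neg_distrib]
    refine Finset.sum_bij' (fun φ _ => Function.update φ j true)
      (fun ψ _ => Function.update ψ j false) ?_ ?_ ?_ ?_ ?_
    · intro φ hφ
      rw [Finset.mem_filter, mem_allowedSet] at hφ
      rw [mem_allowedSet, allowed_lowerFacet]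
      refine ⟨fun k hk => ?_, Function.update_self j true φ⟩
      rcases eq_or_ne k j with rfl | hkj
      · exact Function.update_self k true φ
      · simpa [Function.update_of_ne hkj] using hφ.1 k hk
    · intro ψ hψ
      rw [mem_allowedSet, allowed_lowerFacet] at hψ
      rw [Finset.mem_filter, mem_allowedSet]
      refine ⟨fun k hk => ?_, by simp⟩
      rcases eq_or_ne k j with rfl | hkj
      · exact absurd hj hk
      · simpa [Function.update_of_ne hkj] using hψ.1 k hk
    · intro φ hφ
      rw [Finset.mem_filter] at hφ
      have : φ j = false := by
        cases h : φ j
        · rfl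
        · exact absurd h hφ.2
      funext k
      rcases eq_or_ne k j with rfl | hkj
      · simp [this]
      · simp [Function.update_of_ne hkj]
    · intro ψ hψ
      rw [mem_allowedSet, allowed_lowerFacet] at hψ
      funext k
      rcases eq_or_ne k j with rfl | hkj
      · simp [hψ.2]
      · simp [Function.update_of_ne hkj]
    · intro φ hφ
      rw [Finset.mem_filter] at hφ
      have hfj : φ j = false := by
        cases h : φ j
        · rfl
        · exact absurd h hφ.2
      have harg : Function.update (Function.update φ j true) j false = φ := by
        funext k
        rcases eq_or_ne k j with rfl | hkj
        · simp [hfj]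
        · simp [Function.update_of_ne hkj]
      rw [vertex_lowerFacet, harg, lowerCount_update_true hfj, pow_succ]
      simp [neg_smul]
  rw [vol, ← hsplit, hup.symm, hlow]
  abel

lemma volExcept_eq {G : Type*} [AddCommGroup G] {C : Cuboid n}
    {φ₀ : Fin n → Bool} (h : C.Allowed φ₀) (f : (Fin n → ℝ) → G) :
    C.volExcept φ₀ f = C.vol f - (-1 : ℤ) ^ lowerCount φ₀ • f (C.vertex φ₀) := by
  classical
  rw [eq_sub_iff_add_eq, volExcept, vol]
  exact Finset.sum_erase_add _ _ (mem_allowedSet.2 h)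

lemma vertex_mem_vertexSet {C : Cuboid n} {φ : Fin n → Bool} (h : C.Allowed φ) :
    C.vertex φ ∈ C.vertexSet := ⟨φ, h, rfl⟩

lemma vertexSet_upperFacet_subset (C : Cuboid n) (j : Fin n) :
    (C.upperFacet j).vertexSet ⊆ C.vertexSet := by
  rintro p ⟨φ, hφ, rfl⟩
  rw [allowed_upperFacet] at hφ
  exact ⟨φ, hφ.1, by rw [vertex_upperFacet, update_eq_self_of_true hφ.2]⟩

lemma vertexSet_lowerFacet_subset {C : Cuboid n} {j : Fin n} (hj : C.IsDim j) :
    (C.lowerFacet j).vertexSet ⊆ C.vertexSet := by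
  rintro p ⟨φ, hφ, rfl⟩
  rw [allowed_lowerFacet] at hφ
  refine ⟨Function.update φ j false, fun k hk => ?_, vertex_lowerFacet φ⟩
  rcases eq_or_ne k j with rfl | hkj
  · exact absurd hj hk
  · rw [Function.update_of_ne hkj]
    exact hφ.1 k hk

lemma apply_eq_hi_of_mem_upperFacet {C : Cuboid n} {j : Fin n}
    {p : Fin n → ℝ} (h : p ∈ (C.upperFacet j).vertexSet) : p j = C.hi j := by
  obtain ⟨φ, -, rfl⟩ := h
  cases hφ : φ j <;> simp [vertex, upperFacet, hφ]

lemma apply_eq_lo_of_mem_lowerFacet {C : Cuboid n} {j : Fin n}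
    {p : Fin n → ℝ} (h : p ∈ (C.lowerFacet j).vertexSet) : p j = C.lo j := by
  obtain ⟨φ, -, rfl⟩ := h
  cases hφ : φ j <;> simp [vertex, lowerFacet, hφ]

lemma lowerFacet_upperFacet_comm {C : Cuboid n} {i j : Fin n} (h : j ≠ i) :
    (C.upperFacet j).lowerFacet i = (C.lowerFacet i).upperFacet j := by
  have h1 : (Function.update C.hi i (C.lo i)) j = C.hi j :=
    Function.update_of_ne h _ _
  have h2 : (Function.update C.lo j (C.hi j)) i = C.lo i :=
    Function.update_of_ne (Ne.symm h) _ _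
  simp [upperFacet, lowerFacet, mk.injEq, h1, h2]

open scoped Classical in
/-- The number of dimensions of `C`. -/
noncomputable def dimCard (C : Cuboid n) : ℕ := (Finset.univ.filter C.IsDim).card

open scoped Classical in
lemma dimCard_upperFacet {C : Cuboid n} {j : Fin n} (hj : C.IsDim j) :
    (C.upperFacet j).dimCard + 1 = C.dimCard := by
  unfold dimCard
  have hset : (Finset.univ.filter (C.upperFacet j).IsDim)
      = (Finset.univ.filter C.IsDim).erase j := by
    ext k
    simp [isDim_upperFacet, Finset.mem_erase, and_comm]
  rw [hset, Finset.card_erase_of_mem (by simpa using hj)]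
  have : 0 < (Finset.univ.filter C.IsDim).card :=
    Finset.card_pos.2 ⟨j, by simpa using hj⟩
  omega

open scoped Classical in
lemma dimCard_pos {C : Cuboid n} {j : Fin n} (hj : C.IsDim j) : 0 < C.dimCard :=
  Finset.card_pos.2 ⟨j, by simpa using hj⟩

open scoped Classical in
lemma exists_other_dim {C : Cuboid n} (h : 1 < C.dimCard) (i : Fin n) :
    ∃ j, C.IsDim j ∧ j ≠ i := by
  obtain ⟨j, hj, hji⟩ := Finset.exists_mem_ne h i
  exact ⟨j, by simpa using hj, hji⟩

open scoped Classical in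
lemma isDim_eq_of_dimCard_eq_one {C : Cuboid n} (h : C.dimCard = 1)
    {i k : Fin n} (hi : C.IsDim i) (hk : C.IsDim k) : k = i := by
  have := Finset.card_le_one.1 (le_of_eq h) k (by simpa using hk) i (by simpa using hi)
  exact this

lemma lowerCount_alltrue : lowerCount (fun _ : Fin n => true) = 0 := by
  simp [lowerCount]

lemma lowerCount_sel (i : Fin n) :
    lowerCount (fun j : Fin n => decide (j ≠ i)) = 1 := by
  unfold lowerCount
  have : (Finset.univ.filter fun j : Fin n => decide (j ≠ i) = false) = {i} := by
    ext k
    simp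
  rw [this, Finset.card_singleton]


lemma allowed_sel {D : Cuboid n} {i : Fin n} (hdim : D.IsDim i) :
    D.Allowed fun j => decide (j ≠ i) := by
  intro k hk
  have : k ≠ i := fun h => hk (h ▸ hdim)
  simp [this]

lemma update_alltrue_eq_sel (i : Fin n) :
    Function.update (fun _ : Fin n => true) i false = fun j => decide (j ≠ i) := by
  funext k
  rcases eq_or_ne k i with rfl | hki
  · simp
  · simp [Function.update_of_ne hki, hki]

lemma lowerFacet_vertex_alltrue (D : Cuboid n) (i : Fin n) :
    (D.lowerFacet i).vertex (fun _ => true) = D.vertex fun j => decide (j ≠ i) := by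
  rw [vertex_lowerFacet, update_alltrue_eq_sel]

/-- `|β − ∂'ᵢ(D)|_L = L β − |∂'ᵢ(D)|_L` formally, with `β` the top vertex. -/
lemma lf_volExcept_eq {G : Type*} [AddCommGroup G] (D : Cuboid n) (i : Fin n)
    (L : (Fin n → ℝ) → G) :
    (D.lowerFacet i).volExcept (fun _ => true) L
      = (D.lowerFacet i).vol L - L (D.vertex fun j => decide (j ≠ i)) := by
  have htop : (D.lowerFacet i).Allowed fun _ => true := fun _ _ => rfl
  rw [volExcept_eq htop, lowerCount_alltrue, pow_zero, one_smul,
    lowerFacet_vertex_alltrue]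

lemma volExcept_sel_eq {G : Type*} [AddCommGroup G] {D : Cuboid n} {i : Fin n}
    (hdim : D.IsDim i) (L : (Fin n → ℝ) → G) :
    D.volExcept (fun j => decide (j ≠ i)) L
      = D.vol L + L (D.vertex fun j => decide (j ≠ i)) := by
  rw [volExcept_eq (allowed_sel hdim), lowerCount_sel, pow_one, neg_smul,
    one_smul, sub_neg_eq_add]

lemma vertex_sel_apply_self (D : Cuboid n) (i : Fin n) :
    (D.vertex fun j => decide (j ≠ i)) i = D.lo i := by
  simp [vertex]

lemma vertex_sel_apply_ne (D : Cuboid n) {i j : Fin n} (h : j ≠ i) :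
    (D.vertex fun k => decide (k ≠ i)) j = D.hi j := by
  simp [vertex, h]

lemma upperFacet_vertex_sel {D : Cuboid n} {i j : Fin n} (h : j ≠ i) :
    (D.upperFacet j).vertex (fun k => decide (k ≠ i))
      = D.vertex fun k => decide (k ≠ i) := by
  rw [vertex_upperFacet, update_eq_self_of_true (by simp [h])]

/-- Induction for the upper bound `|D + β|_L ≤ u`. -/
lemma aux_upper {G : Type*} [AddCommGroup G] [PartialOrder G] [IsOrderedAddMonoid G] {u : G}
    {Cv : Set (Fin n → ℝ)} {i : Fin n} {L : (Fin n → ℝ) → G} {β : Fin n → ℝ}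
    (hval : ∀ p ∈ Cv \ {β}, L p ∈ Set.Icc (0 : G) u)
    (hlift : ∀ D : Cuboid n, D.vertexSet ⊆ Cv \ {β} →
      D.vol L ∈ Set.Icc (0 : G) u) :
    ∀ (m : ℕ) (D : Cuboid n), D.dimCard = m → D.IsDim i →
      D.vertexSet ⊆ Cv → (D.vertex fun j => decide (j ≠ i)) = β →
      D.volExcept (fun j => decide (j ≠ i)) L ≤ u := by
  classical
  intro m
  induction m using Nat.strong_induction_on with
  | _ m IH =>
  intro D hm hdim hsub hβ
  by_cases hm1 : 1 < m
  · -- inductive step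
    obtain ⟨j, hjdim, hji⟩ := exists_other_dim (hm ▸ hm1) i
    have hij : i ≠ j := Ne.symm hji
    have hupdim : (D.upperFacet j).IsDim i := isDim_upperFacet.2 ⟨hij, hdim⟩
    have hupβ : ((D.upperFacet j).vertex fun k => decide (k ≠ i)) = β := by
      rw [upperFacet_vertex_sel hji, hβ]
    have key : D.volExcept (fun k => decide (k ≠ i)) L
        = (D.upperFacet j).volExcept (fun k => decide (k ≠ i)) L
          - (D.lowerFacet j).vol L := by
      rw [volExcept_sel_eq hdim, volExcept_sel_eq hupdim, hupβ, hβ,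
        vol_decomp D j hjdim]
      abel
    have hlf : 0 ≤ (D.lowerFacet j).vol L := by
      refine (hlift _ fun p hp => ⟨hsub (vertexSet_lowerFacet_subset hjdim hp), ?_⟩).1
      intro hpβ
      have h1 : p j = D.lo j := apply_eq_lo_of_mem_lowerFacet hp
      have h2 : β j = D.hi j := by rw [← hβ, vertex_sel_apply_ne D hji]
      rw [Set.mem_singleton_iff] at hpβ
      rw [hpβ, h2] at h1
      exact (ne_of_lt hjdim).symm h1
    have hup : (D.upperFacet j).volExcept (fun k => decide (k ≠ i)) L ≤ u := by
      refine IH (D.upperFacet j).dimCard ?_ _ rfl hupdim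
        ((vertexSet_upperFacet_subset D j).trans hsub) hupβ
      have := dimCard_upperFacet hjdim
      omega
    rw [key]
    exact (sub_le_self _ hlf).trans hup
  · -- base case: `dimCard D = 1`
    have hm1' : D.dimCard = 1 := by
      have := dimCard_pos hdim
      omega
    have htop : D.Allowed fun _ => true := fun _ _ => rfl
    have hne : (fun _ : Fin n => true) ≠ fun j => decide (j ≠ i) := by
      intro h
      have := congrFun h i
      simp at this
    have hset : D.allowedSet.erase (fun j => decide (j ≠ i))
        = {fun _ => true} := by
      ext φ
      rw [Finset.mem_erase, mem_allowedSet, Finset.mem_singleton]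
      constructor
      · rintro ⟨hφne, hφ⟩
        have hφi : φ i = true := by
          by_contra hfi
          have hfi' : φ i = false := by
            cases h : φ i
            · rfl
            · exact absurd h hfi
          refine hφne ?_
          funext k
          by_cases hk : D.IsDim k
          · have : k = i := isDim_eq_of_dimCard_eq_one hm1' hdim hk
            subst this
            simp [hfi']
          · have hki : k ≠ i := fun h => hk (h ▸ hdim)
            rw [hφ k hk]
            simp [hki]
        funext k
        by_cases hk : D.IsDim k
        · have : k = i := isDim_eq_of_dimCard_eq_one hm1' hdim hk
          subst this
          exact hφi
        · exact hφ k hk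
      · rintro rfl
        exact ⟨hne, htop⟩
    have hval' : L (D.vertex fun _ => true) ≤ u := by
      refine (hval _ ⟨hsub (vertex_mem_vertexSet htop), ?_⟩).2
      intro h
      rw [Set.mem_singleton_iff, ← hβ] at h
      exact hne (vertex_inj htop (allowed_sel hdim) h)
    rw [volExcept, hset, Finset.sum_singleton, lowerCount_alltrue, pow_zero,
      one_smul]
    exact hval'

/-- Induction for the lower bound `0 ≤ |β − ∂'ᵢ(D)|_L`. -/
lemma aux_lower {G : Type*} [AddCommGroup G] [PartialOrder G] [IsOrderedAddMonoid G] {u : G}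
    {Cv : Set (Fin n → ℝ)} {i : Fin n} {L : (Fin n → ℝ) → G} {β : Fin n → ℝ}
    (hlift : ∀ D : Cuboid n, D.vertexSet ⊆ Cv \ {β} →
      D.vol L ∈ Set.Icc (0 : G) u) :
    ∀ (m : ℕ) (D : Cuboid n), D.dimCard = m → D.IsDim i →
      D.vertexSet ⊆ Cv → (D.vertex fun j => decide (j ≠ i)) = β →
      (D.lowerFacet i).volExcept (fun _ => true) L ≤ 0 := by
  classical
  intro m
  induction m using Nat.strong_induction_on with
  | _ m IH =>
  intro D hm hdim hsub hβ
  by_cases hm1 : 1 < m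
  · -- inductive step
    obtain ⟨j, hjdim, hji⟩ := exists_other_dim (hm ▸ hm1) i
    have hij : i ≠ j := Ne.symm hji
    have hupdim : (D.upperFacet j).IsDim i := isDim_upperFacet.2 ⟨hij, hdim⟩
    have hupβ : ((D.upperFacet j).vertex fun k => decide (k ≠ i)) = β := by
      rw [upperFacet_vertex_sel hji, hβ]
    have hlfjdim : (D.lowerFacet i).IsDim j := isDim_lowerFacet.2 ⟨hji, hjdim⟩
    have key : (D.lowerFacet i).volExcept (fun _ => true) L
        = ((D.upperFacet j).lowerFacet i).volExcept (fun _ => true) L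
          - ((D.lowerFacet i).lowerFacet j).vol L := by
      rw [lf_volExcept_eq D i L, lf_volExcept_eq (D.upperFacet j) i L, hupβ, hβ,
        vol_decomp (D.lowerFacet i) j hlfjdim, lowerFacet_upperFacet_comm hji]
      abel
    have hlf : 0 ≤ ((D.lowerFacet i).lowerFacet j).vol L := by
      refine (hlift _ fun p hp => ⟨?_, ?_⟩).1
      · exact hsub (vertexSet_lowerFacet_subset hdim
          (vertexSet_lowerFacet_subset hlfjdim hp))
      · intro hpβ
        have h1 : p j = (D.lowerFacet i).lo j := apply_eq_lo_of_mem_lowerFacet hp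
        have h2 : β j = D.hi j := by rw [← hβ, vertex_sel_apply_ne D hji]
        rw [Set.mem_singleton_iff] at hpβ
        rw [hpβ, h2] at h1
        exact (ne_of_lt hjdim).symm h1
    have hup : ((D.upperFacet j).lowerFacet i).volExcept (fun _ => true) L ≤ 0 := by
      refine IH (D.upperFacet j).dimCard ?_ _ rfl hupdim
        ((vertexSet_upperFacet_subset D j).trans hsub) hupβ
      have := dimCard_upperFacet hjdim
      omega
    rw [key]
    exact (sub_le_self _ hlf).trans hup
  · -- base case: `dimCard D = 1`
    have hm1' : D.dimCard = 1 := by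
      have := dimCard_pos hdim
      omega
    have hset : (D.lowerFacet i).allowedSet.erase (fun _ => true) = ∅ := by
      rw [Finset.eq_empty_iff_forall_notMem]
      intro φ hφ
      rw [Finset.mem_erase, mem_allowedSet, allowed_lowerFacet] at hφ
      obtain ⟨hφne, hφall, hφi⟩ := hφ
      refine hφne ?_
      funext k
      by_cases hk : D.IsDim k
      · have : k = i := isDim_eq_of_dimCard_eq_one hm1' hdim hk
        subst this
        exact hφi
      · exact hφall k hk
    rw [volExcept, hset, Finset.sum_empty]
end Cuboid

open Cuboid in
/-- Let `C` be a `d`-cuboid (`d ≥ 1`), `β` the vertex of order `2` having its lower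
value exactly at coordinate `i ∈ Dim(C)` (so `β` is the top vertex of `∂'ᵢ(C)`), and
`L` a partial lift with values in `Γ(G,u)` defined on the vertices of `C` other than
`β`. Then `u ≥ |C + β|_L ≥ |β − ∂'ᵢ(C)|_L ≥ 0`. -/
theorem order_two_vertex_bounds {n : ℕ} {G : Type*} [AddCommGroup G] [PartialOrder G] [IsOrderedAddMonoid G] (u : G)
    (C : Cuboid n) (i : Fin n) (hdim : C.IsDim i)
    (L : (Fin n → ℝ) → G)
    (hval : ∀ p ∈ C.vertexSet \ {C.vertex fun j => decide (j ≠ i)},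
      L p ∈ Set.Icc (0 : G) u)
    (hlift : ∀ D : Cuboid n,
      D.vertexSet ⊆ C.vertexSet \ {C.vertex fun j => decide (j ≠ i)} →
        D.vol L ∈ Set.Icc (0 : G) u) :
    C.volExcept (fun j => decide (j ≠ i)) L ≤ u ∧
    -((C.lowerFacet i).volExcept (fun _ => true) L) ≤
      C.volExcept (fun j => decide (j ≠ i)) L ∧
    0 ≤ -((C.lowerFacet i).volExcept (fun _ => true) L) := by
  classical
  have g1 : C.volExcept (fun j => decide (j ≠ i)) L ≤ u :=
    aux_upper hval hlift C.dimCard C rfl hdim Set.Subset.rfl rfl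
  have g3 : (C.lowerFacet i).volExcept (fun _ => true) L ≤ 0 :=
    aux_lower hlift C.dimCard C rfl hdim Set.Subset.rfl rfl
  have hupvol : 0 ≤ (C.upperFacet i).vol L := by
    refine (hlift _ fun p hp => ⟨vertexSet_upperFacet_subset C i hp, ?_⟩).1
    intro hpβ
    have h1 : p i = C.hi i := apply_eq_hi_of_mem_upperFacet hp
    rw [Set.mem_singleton_iff] at hpβ
    rw [hpβ, vertex_sel_apply_self] at h1
    exact (ne_of_lt hdim) h1
  have key : C.volExcept (fun j => decide (j ≠ i)) L
      = (C.upperFacet i).vol L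
        + -((C.lowerFacet i).volExcept (fun _ => true) L) := by
    rw [volExcept_sel_eq hdim, lf_volExcept_eq C i L, vol_decomp C i hdim]
    abel
  refine ⟨g1, ?_, neg_nonneg.2 g3⟩
  rw [key]
  exact le_add_of_nonneg_left hupvol
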